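/- Let A and B be positive invertible bounded operators on a complex Hilbert space H, and let m, m', M be positive real numbers such that 0 < m·I ≤ m'·B ≤ A ≤ M·I. Then A + m'·B ≤ (√(M·m'/m) + √(m·m'/M))·(A ♯ B). -/

import Mathlib

set_option synthInstance.maxHeartbeats 1000000
set_option maxHeartbeats 1000000

open scoped InnerProductSpace

variable {H : Type*} [NormedAddCommGroup H] [InnerProductSpace ℂ H] [CompleteSpace H]

lemma scalar_key (m m' M x : ℝ) (hm : 0 < m) (hm' : 0 < m') (hM : 0 < M)
    (hx1 : m / (M * m') ≤ x) (hx2 : x ≤ 1 / m') :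
    1 + m' * x ≤ (Real.sqrt (M * m' / m) + Real.sqrt (m * m' / M)) * Real.sqrt x := by
  have hx0 : 0 ≤ x := le_trans (by positivity) hx1
  set u := Real.sqrt x with hu
  set p := Real.sqrt (m / (M * m')) with hp
  set q := Real.sqrt (M / (m * m')) with hq
  have hu2 : u ^ 2 = x := Real.sq_sqrt hx0
  have hp2 : p ^ 2 = m / (M * m') := Real.sq_sqrt (by positivity)
  have hq2 : q ^ 2 = M / (m * m') := Real.sq_sqrt (by positivity)
  have hp0 : 0 < p := Real.sqrt_pos.mpr (by positivity)
  have hq0 : 0 < q := Real.sqrt_pos.mpr (by positivity)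
  have hu0 : 0 ≤ u := Real.sqrt_nonneg x
  have hpu : p ≤ u := Real.sqrt_le_sqrt hx1
  have hpq : p * q = 1 / m' := by
    rw [hp, hq, ← Real.sqrt_mul (by positivity)]
    rw [show m / (M * m') * (M / (m * m')) = (1 / m') ^ 2 by field_simp]
    exact Real.sqrt_sq (by positivity)
  have hplq : p ≤ q := by
    nlinarith [hpu, hu2, hx2, hpq, hp0, hq0, hu0]
  have huq : u ≤ q := by
    nlinarith [hu2, hx2, hpq, hq0, hu0, hplq]
  have h1 : Real.sqrt (M * m' / m) = m' * q := by
    rw [show M * m' / m = m' ^ 2 * (M / (m * m')) by field_simp,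
      Real.sqrt_mul (by positivity), Real.sqrt_sq hm'.le, hq]
  have h2 : Real.sqrt (m * m' / M) = m' * p := by
    rw [show m * m' / M = m' ^ 2 * (m / (M * m')) by field_simp,
      Real.sqrt_mul (by positivity), Real.sqrt_sq hm'.le, hp]
  have hpq' : m' * (p * q) = 1 := by rw [hpq]; field_simp
  rw [h1, h2, ← hu2]
  nlinarith [mul_nonneg (mul_nonneg hm'.le (sub_nonneg.2 hpu)) (sub_nonneg.2 huq), hpq']

/-- The operator geometric mean `A ♯ B = A^(1/2) (A^(-1/2) B A^(-1/2))^(1/2) A^(1/2)`,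
where square roots are given by the continuous functional calculus. -/
noncomputable def geomMean (A B : H →L[ℂ] H) : H →L[ℂ] H :=
  CFC.sqrt A * CFC.sqrt (Ring.inverse (CFC.sqrt A) * B * Ring.inverse (CFC.sqrt A)) * CFC.sqrt A

theorem operator_sum_le_geomMean (A B : H →L[ℂ] H) (m m' M : ℝ)
    (hA : 0 ≤ A) (hA' : IsUnit A) (hB : 0 ≤ B) (hB' : IsUnit B)
    (hm : 0 < m) (hm' : 0 < m') (hM : 0 < M)
    (h1 : m • (1 : H →L[ℂ] H) ≤ m' • B) (h2 : m' • B ≤ A) (h3 : A ≤ M • (1 : H →L[ℂ] H)) :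
    A + m' • B ≤ (Real.sqrt (M * m' / m) + Real.sqrt (m * m' / M)) • geomMean A B := by
  set S := CFC.sqrt A with hS_def
  have hS0 : 0 ≤ S := CFC.sqrt_nonneg A
  have hSS : S * S = A := CFC.sqrt_mul_sqrt_self A hA
  have hSsa : IsSelfAdjoint S := .of_nonneg hS0
  -- S is a unit
  obtain ⟨u, hu⟩ := hA'
  have hLS : (↑u⁻¹ * S) * S = 1 := by
    rw [mul_assoc, hSS, ← hu]; exact u.inv_mul
  have hSR : S * (S * ↑u⁻¹) = 1 := by
    rw [← mul_assoc, hSS, ← hu]; exact u.mul_inv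
  have hLR : (↑u⁻¹ * S : H →L[ℂ] H) = S * ↑u⁻¹ := by
    calc (↑u⁻¹ * S : H →L[ℂ] H) = (↑u⁻¹ * S) * (S * (S * ↑u⁻¹)) := by rw [hSR, mul_one]
    _ = ((↑u⁻¹ * S) * S) * (S * ↑u⁻¹) := by noncomm_ring
    _ = S * ↑u⁻¹ := by rw [hLS, one_mul]
  have hSunit : IsUnit S := ⟨⟨S, S * ↑u⁻¹, hSR, by rw [← hLR, hLS]⟩, rfl⟩
  set Si := Ring.inverse S with hSi_def
  have hSiS : Si * S = 1 := Ring.inverse_mul_cancel S hSunit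
  have hSSi : S * Si = 1 := Ring.mul_inverse_cancel S hSunit
  have hSista : star Si = Si := by
    rw [hSi_def, ← Ring.inverse_star, hSsa.star_eq]
  set T := Si * B * Si with hT_def
  have hT0 : 0 ≤ T := by
    have := star_left_conjugate_nonneg hB Si
    rwa [hSista] at this
  have hTsa : IsSelfAdjoint T := .of_nonneg hT0
  have hSiASi : Si * A * Si = 1 := by
    rw [← hSS, show Si * (S * S) * Si = (Si * S) * (S * Si) by noncomm_ring, hSiS, hSSi, one_mul]
  -- upper bound on T
  have hmT_le : m' • T ≤ 1 := by
    have := star_left_conjugate_le_conjugate h2 Si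
    rw [hSista, hSiASi] at this
    calc m' • T = Si * (m' • B) * Si := by
          rw [hT_def, mul_smul_comm, smul_mul_assoc]
    _ ≤ 1 := this
  have hub : T ≤ algebraMap ℝ (H →L[ℂ] H) (1 / m') := by
    have := smul_le_smul_of_nonneg_left hmT_le (by positivity : (0:ℝ) ≤ 1/m')
    rw [Algebra.algebraMap_eq_smul_one]
    rwa [smul_smul, one_div_mul_cancel hm'.ne', one_smul] at this
  -- lower bound on T
  have hAB : (m / M) • A ≤ m' • B := by
    calc (m / M) • A ≤ (m / M) • (M • (1 : H →L[ℂ] H)) :=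
          smul_le_smul_of_nonneg_left h3 (by positivity)
    _ = m • (1 : H →L[ℂ] H) := by rw [smul_smul, div_mul_cancel₀ m hM.ne']
    _ ≤ m' • B := h1
  have hlb : algebraMap ℝ (H →L[ℂ] H) (m / (M * m')) ≤ T := by
    have hc := star_left_conjugate_le_conjugate hAB Si
    rw [hSista, show Si * ((m / M) • A) * Si = (m / M) • (Si * A * Si) by
          rw [mul_smul_comm, smul_mul_assoc],
      hSiASi, show Si * (m' • B) * Si = m' • T by rw [hT_def, mul_smul_comm, smul_mul_assoc]]
      at hc
    have := smul_le_smul_of_nonneg_left hc (by positivity : (0:ℝ) ≤ 1/m')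
    rw [smul_smul, smul_smul, one_div_mul_cancel hm'.ne', one_smul,
      show 1 / m' * (m / M) = m / (M * m') by ring] at this
    rwa [Algebra.algebraMap_eq_smul_one]
  have hspec_ub : ∀ x ∈ spectrum ℝ T, x ≤ 1 / m' :=
    (le_algebraMap_iff_spectrum_le (a := T) hTsa).mp hub
  have hspec_lb : ∀ x ∈ spectrum ℝ T, m / (M * m') ≤ x :=
    (algebraMap_le_iff_le_spectrum (a := T) hTsa).mp hlb
  set c := Real.sqrt (M * m' / m) + Real.sqrt (m * m' / M) with hc_def
  -- key cfc inequality
  have hkey : cfc (fun x : ℝ => 1 + m' * x) T ≤ cfc (fun x : ℝ => c * Real.sqrt x) T := by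
    apply cfc_mono
    · intro x hx
      exact scalar_key m m' M x hm hm' hM (hspec_lb x hx) (hspec_ub x hx)
    · exact Continuous.continuousOn (by fun_prop)
    · exact Continuous.continuousOn (by fun_prop)
  have hsqrtT : CFC.sqrt T = cfc Real.sqrt T := by
    rw [CFC.sqrt_eq_cfc, cfc_nnreal_eq_real _ T hT0]
    exact cfc_congr fun x hx => (Real.sqrt.eq_1 x).symm
  have hlhs : cfc (fun x : ℝ => 1 + m' * x) T = 1 + m' • T := by
    rw [cfc_const_add 1 (fun x : ℝ => m' * x) T, cfc_const_mul_id m' T, map_one]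
  have hrhs : cfc (fun x : ℝ => c * Real.sqrt x) T = c • CFC.sqrt T := by
    rw [hsqrtT, ← cfc_const_mul c Real.sqrt T (Continuous.continuousOn (by fun_prop))]
  rw [hlhs, hrhs] at hkey
  have hfin := star_left_conjugate_le_conjugate hkey S
  rw [hSsa.star_eq] at hfin
  have hlhs2 : S * (1 + m' • T) * S = A + m' • B := by
    rw [mul_add, add_mul, mul_one, hSS, hT_def, mul_smul_comm, smul_mul_assoc]
    congr 1
    rw [show S * (Si * B * Si) * S = (S * Si) * B * (Si * S) by noncomm_ring, hSSi, hSiS,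
      one_mul, mul_one]
  have hrhs2 : S * (c • CFC.sqrt T) * S = c • geomMean A B := by
    rw [mul_smul_comm, smul_mul_assoc, geomMean, ← hS_def, ← hSi_def, ← hT_def]
  rwa [hlhs2, hrhs2] at hfin
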